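/- arXiv:1308.2115 — 2 statements merged into one kernel-verified Lean document; each statement's English description precedes it below -/
import Mathlib

section
/- For integers r ≥ 0, k and n ≥ 0, the number A_n^{(r,k)} := A_n^{(r,k)}(0) equals Σ_{m=0}^n Σ_{l=0}^m (C(m,l)/(C(m-l+r,r)·(l+1)^k)) · S₁(n,m) · S₂(m-l+r, r). -/
open PowerSeries Finset Polynomial

namespace Cauchy14

/-- coefficients of descPochhammer: the (signed) Stirling numbers of the first kind -/
noncomputable def t (n m : ℕ) : ℚ := (descPochhammer ℚ n).coeff m

lemma t_eq_zero {n m : ℕ} (h : n < m) : t n m = 0 := by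
  apply Polynomial.coeff_eq_zero_of_natDegree_lt
  simpa using h

lemma t_zero (m : ℕ) : t 0 m = if m = 0 then 1 else 0 := by
  simp [t, descPochhammer_zero, Polynomial.coeff_one]

lemma t_succ (n m : ℕ) :
    t (n+1) (m+1) = t n m - (n : ℚ) * t n (m+1) := by
  rw [t, t, t, descPochhammer_succ_right, mul_sub, Polynomial.coeff_sub,
    Polynomial.coeff_mul_X]
  congr 1
  rw [← Polynomial.C_eq_natCast, Polynomial.coeff_mul_C]
  ring

lemma t_succ_zero (n : ℕ) : t (n+1) 0 = -(n:ℚ) * t n 0 := by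
  rw [t, t, descPochhammer_succ_right, mul_sub, Polynomial.coeff_sub]
  rw [← Polynomial.C_eq_natCast, Polynomial.coeff_mul_C]
  simp [Polynomial.mul_coeff_zero]
  ring

end Cauchy14

namespace Cauchy14

section S2
variable (S2 : ℕ → ℕ → ℕ)
    (hS200 : S2 0 0 = 1)
    (hS2n0 : ∀ n : ℕ, S2 (n + 1) 0 = 0)
    (hS20m : ∀ m : ℕ, S2 0 (m + 1) = 0)
    (hS2rec : ∀ n m : ℕ, S2 (n + 1) (m + 1) = (m + 1) * S2 n (m + 1) + S2 n m)

include hS20m hS2rec in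
lemma S2_eq_zero : ∀ i j : ℕ, i < j → S2 i j = 0 := by
  intro i
  induction i with
  | zero => intro j hj; match j, hj with | (m+1), _ => exact hS20m m
  | succ i ih =>
    intro j hj
    match j, hj with
    | (m+1), hj =>
      rw [hS2rec]
      have h1 : i < m + 1 := by omega
      have h2 : i < m := by omega
      rw [ih _ h1, ih _ h2]
      simp

include hS200 hS2n0 hS20m hS2rec in
lemma X_pow_eq : ∀ i : ℕ, (Polynomial.X : Polynomial ℚ) ^ i =
    ∑ j ∈ range (i+1), (S2 i j : ℚ) • descPochhammer ℚ j := by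
  intro i
  induction i with
  | zero => simp [hS200]
  | succ i ih =>
    have key : ∀ j : ℕ, Polynomial.X * descPochhammer ℚ j =
        descPochhammer ℚ (j+1) + (j : ℚ) • descPochhammer ℚ j := by
      intro j
      rw [descPochhammer_succ_right, Polynomial.smul_eq_C_mul, map_natCast]
      ring
    rw [pow_succ, mul_comm, ih, Finset.mul_sum]
    have lhs_eq : ∑ j ∈ range (i+1), Polynomial.X * ((S2 i j : ℚ) • descPochhammer ℚ j) =
        (∑ j ∈ range (i+1), (S2 i j : ℚ) • descPochhammer ℚ (j+1)) +
        ∑ j ∈ range (i+1), ((j : ℚ) * S2 i j) • descPochhammer ℚ j := by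
      rw [← Finset.sum_add_distrib]
      refine Finset.sum_congr rfl fun j _ => ?_
      rw [mul_smul_comm, key, smul_add, mul_smul]
      congr 1
      rw [smul_comm]
    rw [lhs_eq]
    -- second sum: drop j = 0 term, reindex
    have s2 : ∑ j ∈ range (i+1), ((j : ℚ) * S2 i j) • descPochhammer ℚ j =
        ∑ j ∈ range (i+1), (((j:ℚ)+1) * S2 i (j+1)) • descPochhammer ℚ (j+1) := by
      rw [Finset.sum_range_succ' (fun j => ((j : ℚ) * S2 i j) • descPochhammer ℚ j) i]
      rw [Finset.sum_range_succ (fun j => (((j:ℚ)+1) * S2 i (j+1)) • descPochhammer ℚ (j+1)) i]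
      rw [S2_eq_zero S2 hS20m hS2rec i (i+1) (by omega)]
      simp
    rw [s2, ← Finset.sum_add_distrib]
    rw [Finset.sum_range_succ' (fun j => (S2 (i+1) j : ℚ) • descPochhammer ℚ j) (i+1)]
    rw [hS2n0]
    simp only [Nat.cast_zero, zero_smul, add_zero]
    refine (Finset.sum_congr rfl fun j _ => ?_).symm
    rw [hS2rec]
    push_cast
    rw [← add_smul]
    ring_nf

end S2

lemma dp_indep : ∀ (N : ℕ) (c : ℕ → ℚ),
    (∑ j ∈ range N, c j • descPochhammer ℚ j) = 0 → ∀ j < N, c j = 0 := by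
  intro N
  induction N with
  | zero => intro c _ j hj; omega
  | succ N ih =>
    intro c hc j hj
    have hcN : c N = 0 := by
      have := congrArg (fun p => Polynomial.coeff p N) hc
      simp only [Polynomial.finset_sum_coeff, Polynomial.coeff_smul, Polynomial.coeff_zero] at this
      rw [Finset.sum_range_succ] at this
      have hz : ∀ x ∈ range N, c x • (descPochhammer ℚ x).coeff N = 0 := by
        intro x hx
        rw [Polynomial.coeff_eq_zero_of_natDegree_lt (by simpa using (Finset.mem_range.mp hx))]
        simp
      rw [Finset.sum_eq_zero hz, zero_add] at this
      have hm : (descPochhammer ℚ N).coeff N = 1 := by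
        have := monic_descPochhammer ℚ N
        simpa [Polynomial.Monic, Polynomial.leadingCoeff, descPochhammer_natDegree] using this
      rw [hm] at this
      simpa using this
    rcases Nat.lt_succ_iff_lt_or_eq.mp hj with h | h
    · apply ih c _ j h
      rw [Finset.sum_range_succ, hcN, zero_smul, add_zero] at hc
      exact hc
    · rw [h]; exact hcN

end Cauchy14

namespace Cauchy14
section orth
variable (S2 : ℕ → ℕ → ℕ)
    (hS200 : S2 0 0 = 1)
    (hS2n0 : ∀ n : ℕ, S2 (n + 1) 0 = 0)
    (hS20m : ∀ m : ℕ, S2 0 (m + 1) = 0)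
    (hS2rec : ∀ n m : ℕ, S2 (n + 1) (m + 1) = (m + 1) * S2 n (m + 1) + S2 n m)

include hS200 hS2n0 hS20m hS2rec in
lemma orth (n j : ℕ) :
    ∑ i ∈ range (n+1), t n i * (S2 i j : ℚ) = if n = j then 1 else 0 := by
  rcases lt_or_ge n j with h | h
  · rw [if_neg (by omega)]
    apply Finset.sum_eq_zero
    intro i hi
    rw [S2_eq_zero S2 hS20m hS2rec i j (by simp at hi; omega)]
    simp
  · -- j ≤ n
    set c : ℕ → ℚ := fun j => (∑ i ∈ range (n+1), t n i * (S2 i j : ℚ)) - (if n = j then 1 else 0)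
      with hc
    have hsum : (∑ j ∈ range (n+1), c j • descPochhammer ℚ j) = 0 := by
      simp only [hc, sub_smul, Finset.sum_sub_distrib]
      have h2 : ∑ j ∈ range (n+1), (if n = j then (1:ℚ) else 0) • descPochhammer ℚ j
          = descPochhammer ℚ n := by
        rw [Finset.sum_eq_single n]
        · simp
        · intro b _ hb; rw [if_neg (by omega)]; simp
        · intro hb; simp at hb
      rw [h2]
      have h1 : ∑ j ∈ range (n+1), (∑ i ∈ range (n+1), t n i * (S2 i j : ℚ)) • descPochhammer ℚ j
          = descPochhammer ℚ n := by
        simp only [Finset.sum_smul]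
        rw [Finset.sum_comm]
        have h3 : ∀ i ∈ range (n+1),
            ∑ j ∈ range (n+1), (t n i * (S2 i j:ℚ)) • descPochhammer ℚ j
            = t n i • (Polynomial.X : Polynomial ℚ) ^ i := by
          intro i hi
          simp only [Finset.mem_range] at hi
          have h5 : ∑ j ∈ range (i+1), (t n i * (S2 i j:ℚ)) • descPochhammer ℚ j
              = ∑ j ∈ range (n+1), (t n i * (S2 i j:ℚ)) • descPochhammer ℚ j := by
            apply Finset.sum_subset (Finset.range_subset_range.mpr (by omega))
            intro j hj hj2
            simp only [Finset.mem_range] at hj hj2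
            rw [S2_eq_zero S2 hS20m hS2rec i j (by omega)]
            simp
          rw [← h5, X_pow_eq S2 hS200 hS2n0 hS20m hS2rec i, Finset.smul_sum]
          exact Finset.sum_congr rfl fun j _ => (mul_smul _ _ _)
        rw [Finset.sum_congr rfl h3]
        have h4 := Polynomial.as_sum_range' (descPochhammer ℚ n) (n+1)
          (by rw [descPochhammer_natDegree]; omega)
        conv_rhs => rw [h4]
        refine Finset.sum_congr rfl fun i _ => ?_
        rw [Polynomial.smul_eq_C_mul, Polynomial.C_mul_X_pow_eq_monomial]
        rfl
      rw [h1, sub_self]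
    have := dp_indep (n+1) c hsum j (by omega)
    rw [hc] at this
    simpa [sub_eq_zero] using this

end orth
end Cauchy14

namespace Cauchy14
section coeffL
open PowerSeries
variable (L : PowerSeries ℚ)
    (hL : ∀ n : ℕ, PowerSeries.coeff n L = if n = 0 then 0 else (-1 : ℚ) ^ (n - 1) / n)

include hL in
lemma deriv_key : (1 + PowerSeries.X) * PowerSeries.derivativeFun L = 1 := by
  ext n
  rw [add_mul, one_mul, map_add]
  cases n with
  | zero =>
    rw [coeff_zero_X_mul, add_zero]
    erw [coeff_derivativeFun]
    rw [hL 1]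
    simp
  | succ n =>
    rw [coeff_succ_X_mul]
    erw [coeff_derivativeFun, coeff_derivativeFun]
    rw [hL (n+2), hL (n+1)]
    have h1 : ((n+2:ℕ) : ℚ) ≠ 0 := by positivity
    have h2 : ((n+1:ℕ) : ℚ) ≠ 0 := by positivity
    simp only [Nat.add_eq_zero, and_false, if_neg, Nat.succ_ne_zero, PowerSeries.coeff_one]
    push_cast
    field_simp
    rw [pow_succ]
    ring

include hL in
lemma coeffL_rec (n m : ℕ) :
    ((n:ℚ)+1) * coeff (n+1) (L ^ m) + (n:ℚ) * coeff n (L ^ m)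
      = (m:ℚ) * coeff n (L ^ (m-1)) := by
  have hd : PowerSeries.derivative ℚ (L ^ m) = m • (L ^ (m-1) * PowerSeries.derivative ℚ L) := by
    rw [Derivation.leibniz_pow, smul_eq_mul]
  have key : (1 + PowerSeries.X) * PowerSeries.derivative ℚ (L ^ m)
      = m • L ^ (m-1) := by
    rw [hd, mul_smul_comm]
    congr 1
    rw [show (1 + PowerSeries.X) * (L ^ (m-1) * PowerSeries.derivative ℚ L)
        = L ^ (m-1) * ((1 + PowerSeries.X) * PowerSeries.derivative ℚ L) by ring]
    have : (1 + PowerSeries.X) * PowerSeries.derivative ℚ L = 1 := deriv_key L hL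
    rw [this, mul_one]
  have := congrArg (fun f => PowerSeries.coeff n f) key
  simp only [add_mul, one_mul, map_add, map_nsmul] at this
  have hder : ∀ (f : PowerSeries ℚ) (p : ℕ), coeff p (PowerSeries.derivative ℚ f)
      = coeff (p+1) f * (p+1) := fun f p => coeff_derivativeFun f p
  cases n with
  | zero =>
    rw [coeff_zero_X_mul, add_zero, hder] at this
    simp only [nsmul_eq_mul] at this
    push_cast at this ⊢
    linarith [this]
  | succ n =>
    rw [coeff_succ_X_mul, hder, hder] at this
    simp only [nsmul_eq_mul] at this
    push_cast at this ⊢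
    linarith [this]

include hL in
lemma coeffL (n : ℕ) : ∀ m : ℕ,
    (n.factorial : ℚ) * coeff n (L ^ m) = (m.factorial : ℚ) * t n m := by
  induction n with
  | zero =>
    intro m
    rw [coeff_zero_eq_constantCoeff, map_pow]
    have h0 : constantCoeff L = 0 := by
      rw [← coeff_zero_eq_constantCoeff, hL 0]; simp
    rw [h0, t_zero]
    cases m <;> simp
  | succ n ih =>
    intro m
    cases m with
    | zero =>
      have hn : t n 0 = (n.factorial : ℚ) * (if n = 0 then 1 else 0) := by
        have := ih 0
        rw [pow_zero] at this
        rw [PowerSeries.coeff_one] at this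
        simpa using this.symm
      rw [pow_zero, PowerSeries.coeff_one, if_neg (Nat.succ_ne_zero n)]
      rw [t_succ_zero, hn]
      cases n <;> simp
    | succ m =>
      have hrec := coeffL_rec L hL n (m+1)
      simp only [Nat.add_sub_cancel] at hrec
      have h1 : ((n+1).factorial : ℚ) * coeff (n+1) (L^(m+1))
          = (n.factorial : ℚ) * (((n:ℚ)+1) * coeff (n+1) (L^(m+1))) := by
        rw [Nat.factorial_succ]; push_cast; ring
      rw [h1]
      have h2 : ((n:ℚ)+1) * coeff (n+1) (L^(m+1))
          = ((m:ℚ)+1) * coeff n (L^m) - (n:ℚ) * coeff n (L^(m+1)) := by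
        push_cast at hrec; linarith
      rw [h2, mul_sub, t_succ]
      have ihm := ih m
      have ihm1 := ih (m+1)
      rw [Nat.factorial_succ] at ihm1 ⊢
      push_cast at ihm1 ⊢
      linear_combination ((m:ℚ)+1) * ihm - (n:ℚ) * ihm1

include hL in
lemma coeffL_zero {n m : ℕ} (h : n < m) : coeff n (L ^ m) = 0 := by
  have := coeffL L hL n m
  rw [t_eq_zero h, mul_zero] at this
  have hf : (n.factorial : ℚ) ≠ 0 := by exact_mod_cast Nat.factorial_ne_zero n
  exact (mul_eq_zero.mp this).resolve_left hf

end coeffL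
end Cauchy14

namespace Cauchy14
section conv
open PowerSeries
variable (L : PowerSeries ℚ)
    (hL : ∀ n : ℕ, PowerSeries.coeff n L = if n = 0 then 0 else (-1 : ℚ) ^ (n - 1) / n)

include hL in
lemma coeff_mul_LL (F H : PowerSeries ℚ) (c e : ℕ → ℚ)
    (hF : ∀ p : ℕ, coeff p F = ∑ j ∈ range (p+1), c j * coeff p (L^j))
    (hH : ∀ p : ℕ, coeff p H = ∑ j ∈ range (p+1), e j * coeff p (L^j))
    (n : ℕ) :
    coeff n (F * H) = ∑ j ∈ range (n+1), ∑ m ∈ range (n+1),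
      c j * e m * coeff n (L^(j+m)) := by
  have ext' : ∀ (c' : ℕ → ℚ) (p : ℕ), p ≤ n →
      (∑ j ∈ range (p+1), c' j * coeff p (L^j))
      = ∑ j ∈ range (n+1), c' j * coeff p (L^j) := by
    intro c' p hp
    apply Finset.sum_subset (Finset.range_subset_range.mpr (by omega))
    intro j hj hj2
    simp only [Finset.mem_range] at hj hj2
    rw [coeffL_zero L hL (by omega), mul_zero]
  rw [PowerSeries.coeff_mul]
  have step : ∀ p ∈ Finset.HasAntidiagonal.antidiagonal n,
      coeff p.1 F * coeff p.2 H =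
      ∑ j ∈ range (n+1), ∑ m ∈ range (n+1),
        c j * e m * (coeff p.1 (L^j) * coeff p.2 (L^m)) := by
    intro p hp
    have hp1 : p.1 ≤ n := Finset.HasAntidiagonal.antidiagonal.fst_le hp
    have hp2 : p.2 ≤ n := Finset.HasAntidiagonal.antidiagonal.snd_le hp
    rw [hF p.1, hH p.2, ext' c p.1 hp1, ext' e p.2 hp2, Finset.sum_mul_sum]
    exact Finset.sum_congr rfl fun j _ => Finset.sum_congr rfl fun m _ => by ring
  rw [Finset.sum_congr rfl step, Finset.sum_comm]
  refine Finset.sum_congr rfl fun j _ => ?_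
  rw [Finset.sum_comm]
  refine Finset.sum_congr rfl fun m _ => ?_
  rw [← Finset.mul_sum, ← PowerSeries.coeff_mul, ← pow_add]

end conv
end Cauchy14

namespace Cauchy14
section sumA
open PowerSeries
variable (L : PowerSeries ℚ)
    (hL : ∀ n : ℕ, PowerSeries.coeff n L = if n = 0 then 0 else (-1 : ℚ) ^ (n - 1) / n)
    (S2 : ℕ → ℕ → ℕ)
    (hS200 : S2 0 0 = 1)
    (hS2n0 : ∀ n : ℕ, S2 (n + 1) 0 = 0)
    (hS20m : ∀ m : ℕ, S2 0 (m + 1) = 0)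
    (hS2rec : ∀ n m : ℕ, S2 (n + 1) (m + 1) = (m + 1) * S2 n (m + 1) + S2 n m)

include hS200 hS2n0 hS20m hS2rec in
lemma orth_shift (n r : ℕ) :
    ∑ m ∈ range (n+1), (S2 (m+r) r : ℚ) * t n (m+r) = if n = r then 1 else 0 := by
  set f : ℕ → ℚ := fun i => (S2 i r : ℚ) * t n i with hf
  have h1 : ∑ m ∈ range (n+1), (S2 (m+r) r : ℚ) * t n (m+r)
      = ∑ i ∈ Finset.Ico r (r+(n+1)), f i := by
    rw [Finset.sum_Ico_eq_sum_range]
    simp only [Nat.add_sub_cancel_left, hf]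
    exact Finset.sum_congr rfl fun m _ => by rw [add_comm r m]
  have h2 : ∑ i ∈ Finset.Ico 0 r, f i = 0 := by
    apply Finset.sum_eq_zero
    intro i hi
    simp only [Finset.mem_Ico] at hi
    rw [hf]
    simp only []
    rw [S2_eq_zero S2 hS20m hS2rec i r (by omega)]
    simp
  have h3 : ∑ i ∈ Finset.Ico 0 r, f i + ∑ i ∈ Finset.Ico r (r+(n+1)), f i
      = ∑ i ∈ Finset.Ico 0 (r+(n+1)), f i :=
    Finset.sum_Ico_consecutive f (by omega) (by omega)
  have h4 : ∑ i ∈ Finset.Ico 0 (r+(n+1)), f i = ∑ i ∈ range (n+1), f i := by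
    rw [← Finset.range_eq_Ico]
    symm
    apply Finset.sum_subset (Finset.range_subset_range.mpr (by omega))
    intro i hi hi2
    simp only [Finset.mem_range] at hi hi2
    rw [hf]
    simp only []
    rw [t_eq_zero (show n < i by omega)]
    simp
  have h5 : ∑ i ∈ range (n+1), f i = if n = r then 1 else 0 := by
    rw [hf]
    simp only []
    rw [← orth S2 hS200 hS2n0 hS20m hS2rec n r]
    exact Finset.sum_congr rfl fun i _ => by ring
  rw [h1, ← h5, ← h4, ← h3, h2, zero_add]

include hL hS200 hS2n0 hS20m hS2rec in
lemma sumA (r n : ℕ) :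
    ∑ m ∈ range (n+1),
      ((r.factorial : ℚ) * (S2 (m+r) r : ℚ) / ((m+r).factorial : ℚ)) * coeff n (L^(r+m))
    = if n = r then 1 else 0 := by
  have hterm : ∀ m ∈ range (n+1),
      ((r.factorial : ℚ) * (S2 (m+r) r : ℚ) / ((m+r).factorial : ℚ)) * coeff n (L^(r+m))
      = ((r.factorial : ℚ) / (n.factorial : ℚ)) * ((S2 (m+r) r : ℚ) * t n (m+r)) := by
    intro m _
    have hc := coeffL L hL n (r+m)
    have hn0 : (n.factorial : ℚ) ≠ 0 := by exact_mod_cast Nat.factorial_ne_zero n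
    have hm0 : ((m+r).factorial : ℚ) ≠ 0 := by exact_mod_cast Nat.factorial_ne_zero (m+r)
    have hco : coeff n (L^(r+m)) = ((r+m).factorial : ℚ) * t n (r+m) / (n.factorial : ℚ) := by
      field_simp at hc ⊢
      linarith [hc]
    rw [hco, show r+m = m+r from add_comm r m]
    field_simp
  rw [Finset.sum_congr rfl hterm, ← Finset.mul_sum,
    orth_shift S2 hS200 hS2n0 hS20m hS2rec n r]
  by_cases h : n = r
  · subst h
    simp [div_self (show (n.factorial : ℚ) ≠ 0 by exact_mod_cast Nat.factorial_ne_zero n)]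
  · simp [h]

end sumA
end Cauchy14

namespace Cauchy14
section FB
open PowerSeries
variable (L : PowerSeries ℚ)
    (hL : ∀ n : ℕ, PowerSeries.coeff n L = if n = 0 then 0 else (-1 : ℚ) ^ (n - 1) / n)
    (Lu : (PowerSeries ℚ)ˣ)
    (hLu : (Lu : PowerSeries ℚ) * PowerSeries.X = L)
    (S2 : ℕ → ℕ → ℕ)
    (hS200 : S2 0 0 = 1)
    (hS2n0 : ∀ n : ℕ, S2 (n + 1) 0 = 0)
    (hS20m : ∀ m : ℕ, S2 0 (m + 1) = 0)
    (hS2rec : ∀ n m : ℕ, S2 (n + 1) (m + 1) = (m + 1) * S2 n (m + 1) + S2 n m)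

/-- the coefficients of `(t/log(1+t))^r` in the `L^j` "basis" -/
noncomputable def Fc (r : ℕ) (S2 : ℕ → ℕ → ℕ) : ℕ → ℚ :=
  fun j => (r.factorial : ℚ) * (S2 (j+r) r : ℚ) / ((j+r).factorial : ℚ)

/-- the power series `(t/log(1+t))^r` -/
noncomputable def FF (L : PowerSeries ℚ) (r : ℕ) (S2 : ℕ → ℕ → ℕ) : PowerSeries ℚ :=
  PowerSeries.mk fun p => ∑ j ∈ range (p+1), Fc r S2 j * coeff p (L^j)

lemma FF_coeff (r : ℕ) (p : ℕ) :
    coeff p (FF L r S2) = ∑ j ∈ range (p+1), Fc r S2 j * coeff p (L^j) :=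
  coeff_mk p _

include hL in
lemma Lr_coeff (r : ℕ) (p : ℕ) :
    coeff p (L^r) = ∑ j ∈ range (p+1), (if j = r then (1:ℚ) else 0) * coeff p (L^j) := by
  simp only [ite_mul, one_mul, zero_mul]
  rw [Finset.sum_ite_eq' (range (p+1)) r (fun j => coeff p (L^j))]
  by_cases h : r ∈ range (p+1)
  · rw [if_pos h]
  · rw [if_neg h]
    simp only [Finset.mem_range] at h
    exact coeffL_zero L hL (by omega)

include hL hS200 hS2n0 hS20m hS2rec in
lemma FF_mul (r : ℕ) : L^r * FF L r S2 = PowerSeries.X ^ r := by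
  ext n
  rw [coeff_mul_LL L hL (L^r) (FF L r S2) _ _ (Lr_coeff L hL r) (FF_coeff L S2 r) n]
  rw [PowerSeries.coeff_X_pow]
  have inner : ∀ j ∈ range (n+1),
      (∑ m ∈ range (n+1), (if j = r then (1:ℚ) else 0) * Fc r S2 m * coeff n (L^(j+m)))
      = if j = r then (∑ m ∈ range (n+1), Fc r S2 m * coeff n (L^(r+m))) else 0 := by
    intro j _
    by_cases h : j = r
    · subst h
      simp
    · simp only [if_neg h, zero_mul, Finset.sum_const_zero]
  rw [Finset.sum_congr rfl inner,
    Finset.sum_ite_eq' (range (n+1)) r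
      (fun _ => ∑ m ∈ range (n+1), Fc r S2 m * coeff n (L^(r+m)))]
  by_cases h : r ∈ range (n+1)
  · rw [if_pos h]
    exact sumA L hL S2 hS200 hS2n0 hS20m hS2rec r n
  · rw [if_neg h]
    simp only [Finset.mem_range] at h
    rw [if_neg (by omega)]

include hL hLu hS200 hS2n0 hS20m hS2rec in
lemma FF_eq (r : ℕ) : FF L r S2 = ((Lu ^ (-(r:ℤ)) : (PowerSeries ℚ)ˣ) : PowerSeries ℚ) := by
  have hXr : (PowerSeries.X : PowerSeries ℚ)^r ≠ 0 := pow_ne_zero r PowerSeries.X_ne_zero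
  have h2 : ((Lu^r : (PowerSeries ℚ)ˣ) : PowerSeries ℚ) * FF L r S2 * PowerSeries.X^r
      = 1 * PowerSeries.X^r := by
    rw [one_mul]
    calc ((Lu^r : (PowerSeries ℚ)ˣ) : PowerSeries ℚ) * FF L r S2 * PowerSeries.X^r
        = ((Lu : PowerSeries ℚ) * PowerSeries.X)^r * FF L r S2 := by
          rw [mul_pow, Units.val_pow_eq_pow_val]; ring
      _ = L^r * FF L r S2 := by rw [hLu]
      _ = PowerSeries.X^r := FF_mul L hL S2 hS200 hS2n0 hS20m hS2rec r
  have h3 : ((Lu^r : (PowerSeries ℚ)ˣ) : PowerSeries ℚ) * FF L r S2 = 1 :=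
    mul_right_cancel₀ hXr h2
  have h4 : ((Lu^r : (PowerSeries ℚ)ˣ)⁻¹ : (PowerSeries ℚ)ˣ) = Lu ^ (-(r:ℤ)) := by
    rw [zpow_neg, zpow_natCast]
  calc FF L r S2
      = (((Lu^r)⁻¹ : (PowerSeries ℚ)ˣ) : PowerSeries ℚ)
        * (((Lu^r : (PowerSeries ℚ)ˣ) : PowerSeries ℚ) * FF L r S2) := by
        rw [← mul_assoc, ← Units.val_mul, inv_mul_cancel, Units.val_one, one_mul]
    _ = (((Lu^r)⁻¹ : (PowerSeries ℚ)ˣ) : PowerSeries ℚ) := by rw [h3, mul_one]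
    _ = ((Lu ^ (-(r:ℤ)) : (PowerSeries ℚ)ˣ) : PowerSeries ℚ) := by rw [h4]

end FB
end Cauchy14

namespace Cauchy14
section final
open PowerSeries
variable (L : PowerSeries ℚ)
    (hL : ∀ n : ℕ, PowerSeries.coeff n L = if n = 0 then 0 else (-1 : ℚ) ^ (n - 1) / n)
    (S2 : ℕ → ℕ → ℕ)

include hL in
lemma final (r n : ℕ) (k : ℤ) :
    (n.factorial : ℚ) * (∑ j ∈ range (n+1), ∑ m ∈ range (n+1),
      Fc r S2 j * (((m.factorial : ℚ) * ((m:ℚ)+1)^k)⁻¹) * coeff n (L^(j+m)))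
    = ∑ m ∈ range (n+1), ∑ l ∈ range (m+1),
      ((m.choose l : ℚ) / (((m - l + r).choose r : ℚ) * ((l:ℚ)+1)^k)) * t n m
        * (S2 (m-l+r) r : ℚ) := by
  have hn0 : (n.factorial : ℚ) ≠ 0 := by exact_mod_cast Nat.factorial_ne_zero n
  -- step 1 : push n! inside and use coeffL
  have step1 : (n.factorial : ℚ) * (∑ j ∈ range (n+1), ∑ m ∈ range (n+1),
      Fc r S2 j * (((m.factorial : ℚ) * ((m:ℚ)+1)^k)⁻¹) * coeff n (L^(j+m)))
      = ∑ j ∈ range (n+1), ∑ m ∈ range (n+1),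
        Fc r S2 j * (((m.factorial : ℚ) * ((m:ℚ)+1)^k)⁻¹) * (((j+m).factorial : ℚ) * t n (j+m)) := by
    rw [Finset.mul_sum]
    refine Finset.sum_congr rfl fun j _ => ?_
    rw [Finset.mul_sum]
    refine Finset.sum_congr rfl fun m _ => ?_
    linear_combination (Fc r S2 j * (((m.factorial : ℚ) * ((m:ℚ)+1)^k)⁻¹)) * coeffL L hL n (j+m)
  rw [step1]
  -- step 2 : extend inner sums on the RHS
  have step2 : ∀ m ∈ range (n+1),
      (∑ l ∈ range (m+1), ((m.choose l : ℚ) / (((m - l + r).choose r : ℚ) * ((l:ℚ)+1)^k))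
        * t n m * (S2 (m-l+r) r : ℚ))
      = ∑ l ∈ range (n+1), ((m.choose l : ℚ) / (((m - l + r).choose r : ℚ) * ((l:ℚ)+1)^k))
        * t n m * (S2 (m-l+r) r : ℚ) := by
    intro m hm
    simp only [Finset.mem_range] at hm
    apply Finset.sum_subset (Finset.range_subset_range.mpr (by omega))
    intro l hl hl2
    simp only [Finset.mem_range] at hl hl2
    rw [Nat.choose_eq_zero_of_lt (by omega)]
    simp
  rw [Finset.sum_congr rfl step2]
  -- step 3 : as sums over the product square
  rw [← Finset.sum_product' (s := range (n+1)) (t := range (n+1))]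
  rw [← Finset.sum_product' (s := range (n+1)) (t := range (n+1))]
  -- step 4 : restrict to filters
  rw [← Finset.sum_filter_of_ne (p := fun p : ℕ × ℕ => p.1 + p.2 ≤ n)
    (fun p _ hp => by
      by_contra hc
      apply hp
      rw [t_eq_zero (show n < p.1 + p.2 by omega)]
      ring)]
  conv_rhs => rw [← Finset.sum_filter_of_ne (p := fun q : ℕ × ℕ => q.2 ≤ q.1)
    (fun q _ hq => by
      by_contra hc
      apply hq
      rw [Nat.choose_eq_zero_of_lt (show q.1 < q.2 by omega)]
      simp)]
  -- step 5 : the bijection (j, m) ↦ (j + m, m)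
  refine Finset.sum_bij' (fun p _ => (p.1 + p.2, p.2)) (fun q _ => (q.1 - q.2, q.2))
    ?_ ?_ ?_ ?_ ?_
  · intro p hp
    simp only [Finset.mem_filter, Finset.mem_product, Finset.mem_range] at hp ⊢
    omega
  · intro q hq
    simp only [Finset.mem_filter, Finset.mem_product, Finset.mem_range] at hq ⊢
    omega
  · intro p hp
    simp only [Finset.mem_filter, Finset.mem_product, Finset.mem_range] at hp
    simp only [Nat.add_sub_cancel]
  · intro q hq
    simp only [Finset.mem_filter, Finset.mem_product, Finset.mem_range] at hq
    have : q.1 - q.2 + q.2 = q.1 := by omega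
    simp [this]
  · intro p hp
    simp only [Finset.mem_filter, Finset.mem_product, Finset.mem_range] at hp
    obtain ⟨⟨hp1, hp2⟩, hp3⟩ := hp
    set j := p.1
    set m := p.2
    show Fc r S2 j * (((m.factorial : ℚ) * ((m:ℚ)+1)^k)⁻¹) * (((j+m).factorial : ℚ) * t n (j+m))
      = (((j+m).choose m : ℚ) / ((((j+m) - m + r).choose r : ℚ) * ((m:ℚ)+1)^k)) * t n (j+m)
        * (S2 ((j+m)-m+r) r : ℚ)
    rw [show (j+m) - m = j by omega]
    rw [Fc]
    have hfac1 : ((j+m).choose m : ℚ) * (m.factorial : ℚ) * (j.factorial : ℚ)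
        = ((j+m).factorial : ℚ) := by
      have h := Nat.choose_mul_factorial_mul_factorial (Nat.le_add_left m j)
      rw [show j + m - m = j by omega] at h
      exact_mod_cast h
    have hfac2 : ((j+r).choose r : ℚ) * (r.factorial : ℚ) * (j.factorial : ℚ)
        = ((j+r).factorial : ℚ) := by
      have h := Nat.choose_mul_factorial_mul_factorial (Nat.le_add_left r j)
      rw [show j + r - r = j by omega] at h
      exact_mod_cast h
    have hz : ((m:ℚ)+1)^k ≠ 0 := zpow_ne_zero k (by positivity)
    have hm0 : (m.factorial : ℚ) ≠ 0 := by exact_mod_cast Nat.factorial_ne_zero _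
    have hj0 : (j.factorial : ℚ) ≠ 0 := by exact_mod_cast Nat.factorial_ne_zero _
    have hr0 : (r.factorial : ℚ) ≠ 0 := by exact_mod_cast Nat.factorial_ne_zero _
    have hb0 : ((j+r).choose r : ℚ) ≠ 0 := by
      have := Nat.choose_pos (Nat.le_add_left r j)
      exact_mod_cast Nat.pos_iff_ne_zero.mp this
    rw [← hfac1, ← hfac2]
    field_simp
end final
end Cauchy14

namespace Cauchy14
section eval
open PowerSeries

lemma eval_step (ψ : PowerSeries ℚ) (B : ℕ → Polynomial ℚ)
    (h : PowerSeries.map (Polynomial.C : ℚ →+* Polynomial ℚ) ψ *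
        PowerSeries.mk (fun n => ((-1 : ℚ) ^ n / n.factorial) • ascPochhammer ℚ n) =
      PowerSeries.mk (fun n => ((n.factorial : ℚ)⁻¹) • B n)) (n : ℕ) :
    (B n).eval 0 = (n.factorial : ℚ) * coeff n ψ := by
  have h' := congrArg (PowerSeries.map (Polynomial.evalRingHom (0:ℚ))) h
  rw [map_mul] at h'
  have e3 : PowerSeries.map (Polynomial.evalRingHom (0:ℚ))
      (PowerSeries.map (Polynomial.C : ℚ →+* Polynomial ℚ) ψ) = ψ := by
    ext m
    rw [PowerSeries.coeff_map, PowerSeries.coeff_map]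
    simp
  have e2 : PowerSeries.map (Polynomial.evalRingHom (0:ℚ))
      (PowerSeries.mk (fun n => ((-1 : ℚ) ^ n / n.factorial) • ascPochhammer ℚ n)) = 1 := by
    ext m
    rw [PowerSeries.coeff_map, coeff_mk, PowerSeries.coeff_one]
    simp only [Polynomial.coe_evalRingHom]
    rw [Polynomial.eval_smul, ascPochhammer_eval_zero]
    by_cases hm : m = 0 <;> simp [hm]
  rw [e3, e2, mul_one] at h'
  have hc := congrArg (fun f => PowerSeries.coeff n f) h'
  simp only [coeff_mk, PowerSeries.coeff_map, Polynomial.coe_evalRingHom] at hc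
  rw [Polynomial.eval_smul, smul_eq_mul] at hc
  have hn0 : (n.factorial : ℚ) ≠ 0 := by exact_mod_cast Nat.factorial_ne_zero n
  field_simp at hc
  linarith [hc]

end eval
end Cauchy14

/-- for integers `r ≥ 0`, `k` and `n ≥ 0`,
`Aₙ^{(r,k)} = Aₙ^{(r,k)}(0) = Σ_{m=0}^n Σ_{l=0}^m (C(m,l)/(C(m-l+r,r)(l+1)^k))
 S₁(n,m) S₂(m-l+r,r)`. -/
theorem cauchy_stmt14
    (r : ℕ) (k : ℤ)
    (L : PowerSeries ℚ)
    (hL : ∀ n : ℕ, PowerSeries.coeff n L = if n = 0 then 0 else (-1 : ℚ) ^ (n - 1) / n)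
    (Lu : (PowerSeries ℚ)ˣ)
    (hLu : (Lu : PowerSeries ℚ) * PowerSeries.X = L)
    (G : ℤ → PowerSeries ℚ)
    (hG : ∀ (j : ℤ) (n : ℕ), PowerSeries.coeff n (G j) =
      ∑ m ∈ Finset.range (n + 1),
        ((m.factorial : ℚ) * ((m : ℚ) + 1) ^ j)⁻¹ * PowerSeries.coeff n (L ^ m))
    (A : ℤ → ℤ → ℕ → Polynomial ℚ)
    (hA : ∀ ρ κ : ℤ, PowerSeries.map (Polynomial.C : ℚ →+* Polynomial ℚ)
        (((Lu ^ (-ρ) : (PowerSeries ℚ)ˣ) : PowerSeries ℚ) * G κ) *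
        PowerSeries.mk (fun n => ((-1 : ℚ) ^ n / n.factorial) • ascPochhammer ℚ n) =
      PowerSeries.mk (fun n => ((n.factorial : ℚ)⁻¹) • A ρ κ n))
    (S1 : ℕ → ℕ → ℚ)
    (hS1 : ∀ n : ℕ, descPochhammer ℚ n =
      ∑ l ∈ Finset.range (n + 1), Polynomial.C (S1 n l) * Polynomial.X ^ l)
    (hS1zero : ∀ n l : ℕ, n < l → S1 n l = 0)
    (S2 : ℕ → ℕ → ℕ)
    (hS200 : S2 0 0 = 1)
    (hS2n0 : ∀ n : ℕ, S2 (n + 1) 0 = 0)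
    (hS20m : ∀ m : ℕ, S2 0 (m + 1) = 0)
    (hS2rec : ∀ n m : ℕ, S2 (n + 1) (m + 1) = (m + 1) * S2 n (m + 1) + S2 n m)
    :
    ∀ n : ℕ, (A (r : ℤ) k n).eval 0 =
      ∑ m ∈ Finset.range (n + 1), ∑ l ∈ Finset.range (m + 1),
        ((m.choose l : ℚ) / (((m - l + r).choose r : ℚ) * ((l : ℚ) + 1) ^ k)) *
          S1 n m * (S2 (m - l + r) r : ℚ) := by
  intro n
  have hS1t : ∀ n m : ℕ, S1 n m = Cauchy14.t n m := by
    intro n m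
    rcases le_or_gt m n with h | h
    · have hc := congrArg (fun p => Polynomial.coeff p m) (hS1 n)
      simp only [Polynomial.finset_sum_coeff, Polynomial.coeff_C_mul,
        Polynomial.coeff_X_pow, mul_ite, mul_one, mul_zero] at hc
      rw [Finset.sum_ite_eq (Finset.range (n+1)) m (fun l => S1 n l),
        if_pos (Finset.mem_range.mpr (by omega))] at hc
      show S1 n m = (descPochhammer ℚ n).coeff m
      exact hc.symm
    · rw [hS1zero n m h, Cauchy14.t_eq_zero h]
  have hev := Cauchy14.eval_step
    (((Lu ^ (-(r:ℤ)) : (PowerSeries ℚ)ˣ) : PowerSeries ℚ) * G k) (A (r:ℤ) k)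
    (hA (r:ℤ) k) n
  rw [hev]
  have hF := Cauchy14.FF_eq L hL Lu hLu S2 hS200 hS2n0 hS20m hS2rec r
  rw [← hF]
  have hco := Cauchy14.coeff_mul_LL L hL (Cauchy14.FF L r S2) (G k)
      (Cauchy14.Fc r S2) (fun m => ((m.factorial : ℚ) * ((m:ℚ)+1)^k)⁻¹)
      (Cauchy14.FF_coeff L S2 r) (fun p => hG k p) n
  rw [hco, Cauchy14.final L hL S2 r n k]
  exact Finset.sum_congr rfl fun m _ => Finset.sum_congr rfl fun l _ => by rw [hS1t]
end

section
/- For integers n-1 ≥ m ≥ 1 and r ≥ 0, k ∈ ℤ: Σ_{l=0}^{n-m} C(n,l)·S₁(n-l,m)·A_l^{(r,k)} = r·Σ_{l=0}^{n-1-m} Σ_{a=0}^{l} (-1)^{l-a+1}·((l-a)!/(l-a+2))·C(n-1,l)·C(l,a)·S₁(n-1-l,m)·A_a^{(r+1,k)}(1) + r·Σ_{l=0}^{n-1-m} C(n-1,l)·S₁(n-l-1,m)·A_l^{(r,k)}(1) + (1/m)·Σ_{l=0}^{n-m} C(n-1,l)·S₁(n-l-1,m-1)·A_l^{(r,k-1)}(1)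 + (1 - 1/m)·Σ_{l=0}^{n-m} C(n-1,l)·S₁(n-l-1,m-1)·A_l^{(r,k)}(1). -/
open PowerSeries

namespace C17

noncomputable def V : ℚ⟦X⟧ := PowerSeries.mk fun n => (-1 : ℚ)^n
noncomputable def H : ℚ⟦X⟧ := PowerSeries.mk fun j => (-1 : ℚ)^(j+1)/((j:ℚ)+2)

lemma hV : ((1 : ℚ⟦X⟧) + X) * V = 1 := by
  ext n
  rw [add_mul, one_mul, map_add]
  cases n with
  | zero => simp [V]
  | succ i => rw [coeff_succ_X_mul]; simp [V, pow_succ]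

lemma coeff_oneX_mul_der (F : ℚ⟦X⟧) (j : ℕ) :
    coeff j (((1 : ℚ⟦X⟧) + X) * (PowerSeries.derivative ℚ F)) =
      ((j:ℚ)+1) * coeff (j+1) F + (j:ℚ) * coeff j F := by
  rw [add_mul, one_mul, map_add, PowerSeries.coeff_derivative]
  cases j with
  | zero => simp
  | succ i =>
    rw [coeff_succ_X_mul, PowerSeries.coeff_derivative]
    push_cast; ring

lemma conv (P Q : ℚ⟦X⟧) (N d : ℕ) (hd : d ≤ N) (F : ℕ → ℚ)
    (hF : ∀ l ∈ Finset.range (N - d + 1), F l = coeff l P * coeff (N - l) Q)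
    (hQ : ∀ j, j < d → coeff j Q = 0) :
    ∑ l ∈ Finset.range (N - d + 1), F l = coeff N (P * Q) := by
  rw [coeff_mul, Finset.Nat.sum_antidiagonal_eq_sum_range_succ_mk]
  rw [Finset.sum_congr rfl hF]
  apply Finset.sum_subset
  · intro x hx
    simp only [Finset.mem_range] at *
    omega
  · intro x hx hnx
    simp only [Finset.mem_range] at hx hnx
    rw [hQ (N - x) (by omega), mul_zero]

lemma mapev (c : ℚ) (S : ℚ⟦X⟧) :
    PowerSeries.map (Polynomial.evalRingHom c) (PowerSeries.map Polynomial.C S) = S := by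
  ext n; simp [PowerSeries.coeff_map]

lemma hBpow (Lu : (ℚ⟦X⟧)ˣ) (r'' : ℕ) :
    ((Lu ^ (-(r'':ℤ)) : (ℚ⟦X⟧)ˣ) : ℚ⟦X⟧) = ((Lu⁻¹ : (ℚ⟦X⟧)ˣ) : ℚ⟦X⟧) ^ r'' := by
  rw [zpow_neg, zpow_natCast, ← inv_pow, ← Units.val_pow_eq_pow_val]

section
variable (L : PowerSeries ℚ)
    (hL : ∀ n : ℕ, PowerSeries.coeff n L = if n = 0 then 0 else (-1 : ℚ) ^ (n - 1) / n)
    (Lu : (PowerSeries ℚ)ˣ)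
    (hLu : (Lu : PowerSeries ℚ) * PowerSeries.X = L)

include hLu in
lemma coeffLm_zero {m n : ℕ} (h : n < m) : coeff n (L ^ m) = 0 := by
  rw [← hLu, mul_pow, PowerSeries.coeff_mul_X_pow' _ _ _]
  simp [not_le.mpr h]

include hL in
lemma ODE : ((1 : ℚ⟦X⟧) + X) * (PowerSeries.derivative ℚ L) = 1 := by
  ext j
  rw [coeff_oneX_mul_der, hL, hL]
  cases j with
  | zero => simp
  | succ i =>
    rw [PowerSeries.coeff_one, if_neg (Nat.succ_ne_zero i)]
    have h1 : ((i:ℚ)+1) ≠ 0 := by positivity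
    have h2 : ((i:ℚ)+1+1) ≠ 0 := by positivity
    simp only [Nat.succ_ne_zero, if_neg, Nat.add_sub_cancel]
    push_cast
    field_simp
    ring

include hL hLu in
lemma hLuc : ∀ j : ℕ, coeff j (Lu : ℚ⟦X⟧) = (-1:ℚ)^j / ((j:ℚ)+1) := by
  intro j
  have := hL (j+1)
  rw [← hLu, coeff_succ_mul_X] at this
  rw [this, if_neg (Nat.succ_ne_zero j)]
  push_cast
  simp

include hL hLu in
lemma K1 : ((1 : ℚ⟦X⟧) + X) * (PowerSeries.derivative ℚ (Lu : ℚ⟦X⟧)) = -(H + (Lu : ℚ⟦X⟧)) := by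
  ext j
  rw [coeff_oneX_mul_der, hLuc L hL Lu hLu, hLuc L hL Lu hLu, map_neg, map_add, hLuc L hL Lu hLu]
  simp only [H, coeff_mk]
  have h1 : ((j:ℚ)+1) ≠ 0 := by positivity
  have h2 : ((j:ℚ)+2) ≠ 0 := by positivity
  push_cast
  field_simp
  ring

lemma K1' (hK1 : ((1 : ℚ⟦X⟧) + X) * (PowerSeries.derivative ℚ (Lu : ℚ⟦X⟧)) = -(H + (Lu : ℚ⟦X⟧))) :
    ∀ r' : ℕ, ((1 : ℚ⟦X⟧) + X) * (PowerSeries.derivative ℚ (((Lu⁻¹ : (ℚ⟦X⟧)ˣ) : ℚ⟦X⟧) ^ r')) =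
      (r' : ℚ⟦X⟧) * (H * ((Lu⁻¹ : (ℚ⟦X⟧)ˣ) : ℚ⟦X⟧) ^ (r'+1))
      + (r' : ℚ⟦X⟧) * ((Lu⁻¹ : (ℚ⟦X⟧)ˣ) : ℚ⟦X⟧) ^ r' := by
  intro r'
  set w : ℚ⟦X⟧ := ((Lu⁻¹ : (ℚ⟦X⟧)ˣ) : ℚ⟦X⟧) with hw
  have hwl : w * (Lu : ℚ⟦X⟧) = 1 := by
    rw [hw, ← Units.val_mul, inv_mul_cancel, Units.val_one]
  have h0 : w * (PowerSeries.derivative ℚ (Lu : ℚ⟦X⟧)) + (Lu : ℚ⟦X⟧) * (PowerSeries.derivative ℚ w) = 0 := by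
    have := congrArg (⇑(PowerSeries.derivative ℚ)) hwl
    rwa [Derivation.leibniz, Derivation.map_one_eq_zero, smul_eq_mul, smul_eq_mul] at this
  have hdw : (PowerSeries.derivative ℚ) w = -(w * w * (PowerSeries.derivative ℚ (Lu : ℚ⟦X⟧))) := by
    have h1 : w * (w * (PowerSeries.derivative ℚ (Lu : ℚ⟦X⟧))) + (w * (Lu : ℚ⟦X⟧)) * (PowerSeries.derivative ℚ w) = 0 := by
      linear_combination w * h0
    rw [hwl, one_mul] at h1
    linear_combination h1
  cases r' with
  | zero => simp
  | succ s =>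
    rw [Derivation.leibniz_pow]
    simp only [Nat.add_sub_cancel, smul_eq_mul, nsmul_eq_mul]
    rw [hdw]
    have : ((1:ℚ⟦X⟧) + X) * (((s:ℚ⟦X⟧)+1) * (w ^ s * -(w * w * (PowerSeries.derivative ℚ (Lu:ℚ⟦X⟧)))))
        = ((s:ℚ⟦X⟧)+1) * (w^s * w * w) * (-( ((1:ℚ⟦X⟧)+X) * (PowerSeries.derivative ℚ (Lu:ℚ⟦X⟧)))) := by ring
    push_cast
    rw [this, hK1, neg_neg]
    have hws : w ^ s * w * w * (Lu : ℚ⟦X⟧) = w ^ (s+1) := by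
      rw [mul_assoc, hwl, mul_one, pow_succ]
    calc ((s:ℚ⟦X⟧)+1) * (w ^ s * w * w) * (H + (Lu:ℚ⟦X⟧))
        = ((s:ℚ⟦X⟧)+1) * (H * (w^s * w * w)) + ((s:ℚ⟦X⟧)+1) * (w^s * w * w * (Lu:ℚ⟦X⟧)) := by ring
      _ = ((s:ℚ⟦X⟧)+1) * (H * w^(s+1+1)) + ((s:ℚ⟦X⟧)+1) * w^(s+1) := by
          rw [hws]; ring_nf

variable (hODE : ((1 : ℚ⟦X⟧) + X) * (PowerSeries.derivative ℚ L) = 1)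

include hODE in
lemma dLm' (m : ℕ) : ((1:ℚ⟦X⟧) + X) * (PowerSeries.derivative ℚ (L^(m+1)))
    = ((m:ℚ⟦X⟧)+1) * (L^m) := by
  rw [Derivation.leibniz_pow]
  simp only [Nat.add_sub_cancel, nsmul_eq_mul, smul_eq_mul]
  push_cast
  calc ((1:ℚ⟦X⟧) + X) * (((m:ℚ⟦X⟧)+1) * (L^m * (PowerSeries.derivative ℚ L)))
      = ((m:ℚ⟦X⟧)+1) * L^m * (((1:ℚ⟦X⟧) + X) * (PowerSeries.derivative ℚ L)) := by ring
    _ = ((m:ℚ⟦X⟧)+1) * (L^m) := by rw [hODE]; ring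

include hODE in
lemma dLm (m : ℕ) : L * (((1:ℚ⟦X⟧) + X) * (PowerSeries.derivative ℚ (L^m)))
    = (m:ℚ⟦X⟧) * (L^m) := by
  cases m with
  | zero => simp
  | succ s =>
    calc L * (((1:ℚ⟦X⟧) + X) * (PowerSeries.derivative ℚ (L^(s+1))))
        = L * (((s:ℚ⟦X⟧)+1) * (L^s)) := by rw [dLm' L hODE s]
      _ = ((s:ℚ⟦X⟧)+1) * L^(s+1) := by ring
      _ = ((s+1:ℕ):ℚ⟦X⟧) * L^(s+1) := by push_cast; ring

variable (G : ℤ → PowerSeries ℚ)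
    (hG : ∀ (j : ℤ) (n : ℕ), PowerSeries.coeff n (G j) =
      ∑ m ∈ Finset.range (n + 1),
        ((m.factorial : ℚ) * ((m : ℚ) + 1) ^ j)⁻¹ * PowerSeries.coeff n (L ^ m))

include hLu hODE hG in
lemma Glem (κ : ℤ) : L * (((1:ℚ⟦X⟧) + X) * (PowerSeries.derivative ℚ (G κ)))
    = G (κ-1) - G κ := by
  ext n
  set a : ℤ → ℕ → ℚ := fun j m1 => ((m1.factorial : ℚ) * ((m1 : ℚ) + 1) ^ j)⁻¹ with ha
  set P : ℚ⟦X⟧ := ∑ m1 ∈ Finset.range (n+2), (a κ m1) • L^m1 with hP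
  have hcP : ∀ i : ℕ, coeff i P = ∑ m1 ∈ Finset.range (n+2), a κ m1 * coeff i (L^m1) := by
    intro i; rw [hP, map_sum]; simp
  have hagree : ∀ i, i ≤ n+1 → coeff i (G κ) = coeff i P := by
    intro i hi
    rw [hG, hcP]
    apply Finset.sum_subset
    · intro x hx; simp only [Finset.mem_range] at *; omega
    · intro x _ hx
      simp only [Finset.mem_range, not_lt] at hx
      rw [coeffLm_zero L Lu hLu (by omega : i < x), mul_zero]
  have hwin : coeff n (L * (((1:ℚ⟦X⟧) + X) * (PowerSeries.derivative ℚ (G κ))))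
      = coeff n (L * (((1:ℚ⟦X⟧) + X) * (PowerSeries.derivative ℚ P))) := by
    rw [coeff_mul, coeff_mul]
    apply Finset.sum_congr rfl
    intro p hp
    replace hp : p.1 + p.2 = n := by simpa using hp
    rw [coeff_oneX_mul_der, coeff_oneX_mul_der, hagree p.2 (by omega),
      hagree (p.2+1) (by omega)]
  rw [hwin]
  have hLP : L * (((1:ℚ⟦X⟧) + X) * (PowerSeries.derivative ℚ P))
      = ∑ m1 ∈ Finset.range (n+2), (a κ m1 * m1) • L^m1 := by
    rw [hP, map_sum]
    rw [Finset.mul_sum, Finset.mul_sum]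
    apply Finset.sum_congr rfl
    intro x _
    rw [Derivation.map_smul]
    have : L * (((1:ℚ⟦X⟧) + X) * (a κ x • (PowerSeries.derivative ℚ (L^x))))
        = a κ x • (L * (((1:ℚ⟦X⟧) + X) * (PowerSeries.derivative ℚ (L^x)))) := by
      simp [mul_smul_comm]
    rw [this, dLm L hODE x, PowerSeries.smul_eq_C_mul, PowerSeries.smul_eq_C_mul,
      ← map_natCast (PowerSeries.C (R := ℚ)) x, map_mul]
    ring
  rw [hLP, map_sub, hG, hG, map_sum]
  simp only [coeff_smul, smul_eq_mul]
  rw [Finset.sum_range_succ]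
  rw [coeffLm_zero L Lu hLu (by omega : n < n+1), mul_zero, add_zero]
  rw [← Finset.sum_sub_distrib]
  apply Finset.sum_congr rfl
  intro x _
  have hx1 : ((x:ℚ)+1) ≠ 0 := by positivity
  have hxz : ((x:ℚ)+1) ^ κ ≠ 0 := zpow_ne_zero κ hx1
  have hxf : ((x.factorial : ℚ)) ≠ 0 := Nat.cast_ne_zero.mpr x.factorial_ne_zero
  have hsub : ((x:ℚ)+1) ^ (κ-1) = ((x:ℚ)+1) ^ κ * ((x:ℚ)+1)⁻¹ := zpow_sub_one₀ hx1 κ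
  rw [ha]
  simp only []
  rw [hsub]
  field_simp
  ring

end

section
variable (S1 : ℕ → ℕ → ℚ)
    (hS1 : ∀ n : ℕ, descPochhammer ℚ n =
      ∑ l ∈ Finset.range (n + 1), Polynomial.C (S1 n l) * Polynomial.X ^ l)
    (hS1zero : ∀ n l : ℕ, n < l → S1 n l = 0)

include hS1 hS1zero in
lemma coeff_desc : ∀ n j : ℕ, (descPochhammer ℚ n).coeff j = S1 n j := by
  intro n j
  rw [hS1 n]
  rw [Polynomial.finset_sum_coeff]
  simp only [Polynomial.coeff_C_mul, Polynomial.coeff_X_pow, mul_ite, mul_one, mul_zero]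
  rw [Finset.sum_ite_eq (Finset.range (n+1)) j (S1 n)]
  by_cases h : j ∈ Finset.range (n+1)
  · rw [if_pos h]
  · rw [if_neg h, hS1zero n j (by simpa using h)]

include hS1 hS1zero in
lemma S1_zero_col (n : ℕ) : S1 (n+1) 0 = 0 := by
  rw [← coeff_desc S1 hS1 hS1zero, Polynomial.coeff_zero_eq_eval_zero,
    descPochhammer_eval_zero, if_neg (Nat.succ_ne_zero n)]

include hS1 hS1zero in
lemma S1_zero_zero : S1 0 0 = 1 := by
  rw [← coeff_desc S1 hS1 hS1zero, descPochhammer_zero, Polynomial.coeff_one_zero]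

include hS1 hS1zero in
lemma S1rec (n l : ℕ) : S1 (n+1) (l+1) = S1 n l - (n:ℚ) * S1 n (l+1) := by
  have h := congrArg (fun p => Polynomial.coeff p (l+1)) (descPochhammer_succ_right ℚ n)
  rw [coeff_desc S1 hS1 hS1zero] at h
  rw [h, mul_sub, Polynomial.coeff_sub, Polynomial.coeff_mul_X,
    ← Polynomial.C_eq_natCast, Polynomial.coeff_mul_C,
    coeff_desc S1 hS1 hS1zero, coeff_desc S1 hS1 hS1zero]
  ring

variable (L : PowerSeries ℚ)
    (Lu : (PowerSeries ℚ)ˣ)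
    (hLu : (Lu : PowerSeries ℚ) * PowerSeries.X = L)
    (hODE : ((1 : ℚ⟦X⟧) + X) * (PowerSeries.derivative ℚ L) = 1)

include hS1 hS1zero hLu hODE in
lemma coeffLm : ∀ n m : ℕ, coeff n (L ^ m)
    = (m.factorial : ℚ) * S1 n m / (n.factorial : ℚ) := by
  intro n
  induction n with
  | zero =>
    intro m
    cases m with
    | zero => simp [S1_zero_zero S1 hS1 hS1zero]
    | succ s =>
      rw [coeffLm_zero L Lu hLu (Nat.succ_pos s), hS1zero 0 (s+1) (Nat.succ_pos s)]
      simp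
  | succ n IH =>
    intro m
    cases m with
    | zero =>
      simp [S1_zero_col S1 hS1 hS1zero n, PowerSeries.coeff_one]
    | succ s =>
      have hE := congrArg (coeff n) (dLm' L hODE s)
      rw [coeff_oneX_mul_der] at hE
      have hcast : ((s:ℚ⟦X⟧)+1) * L^s = ((s:ℚ)+1) • L^s := by
        rw [PowerSeries.smul_eq_C_mul, map_add, map_natCast, map_one]
      rw [hcast, PowerSeries.coeff_smul, smul_eq_mul] at hE
      rw [IH s, IH (s+1)] at hE
      have hn1 : ((n:ℚ)+1) ≠ 0 := by positivity
      have hnf : ((n.factorial : ℚ)) ≠ 0 := Nat.cast_ne_zero.mpr n.factorial_ne_zero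
      have hsolve : coeff (n+1) (L^(s+1)) =
          (((s:ℚ)+1) * ((s.factorial:ℚ) * S1 n s / (n.factorial:ℚ))
            - (n:ℚ) * ((s+1).factorial * S1 n (s+1) / (n.factorial:ℚ))) / ((n:ℚ)+1) := by
        field_simp at hE ⊢
        linarith [hE]
      rw [hsolve, S1rec S1 hS1 hS1zero n s]
      rw [Nat.factorial_succ (s), Nat.factorial_succ n]
      push_cast
      field_simp
end

section
variable (Lu : (PowerSeries ℚ)ˣ) (G : ℤ → PowerSeries ℚ)
    (A : ℤ → ℤ → ℕ → Polynomial ℚ)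
    (hA : ∀ ρ κ : ℤ, PowerSeries.map (Polynomial.C : ℚ →+* Polynomial ℚ)
        (((Lu ^ (-ρ) : (PowerSeries ℚ)ˣ) : PowerSeries ℚ) * G κ) *
        PowerSeries.mk (fun n => ((-1 : ℚ) ^ n / n.factorial) • ascPochhammer ℚ n) =
      PowerSeries.mk (fun n => ((n.factorial : ℚ)⁻¹) • A ρ κ n))

include hA in
lemma E0 (r'' : ℕ) (κ : ℤ) :
    ((Lu⁻¹ : (ℚ⟦X⟧)ˣ) : ℚ⟦X⟧) ^ r'' * G κ
      = PowerSeries.mk (fun l => ((l.factorial:ℚ))⁻¹ * (A (r'':ℤ) κ l).eval 0) := by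
  have h := congrArg (PowerSeries.map (Polynomial.evalRingHom (0:ℚ))) (hA (r'':ℤ) κ)
  rw [map_mul, mapev] at h
  have h2 : PowerSeries.map (Polynomial.evalRingHom (0:ℚ))
      (PowerSeries.mk (fun n => ((-1 : ℚ) ^ n / n.factorial) • ascPochhammer ℚ n)) = 1 := by
    ext n
    rw [PowerSeries.coeff_map, PowerSeries.coeff_mk, PowerSeries.coeff_one]
    cases n with
    | zero => simp
    | succ i =>
      simp [Polynomial.smul_eq_C_mul, ascPochhammer_eval_zero]
  have h3 : PowerSeries.map (Polynomial.evalRingHom (0:ℚ))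
      (PowerSeries.mk (fun n => ((n.factorial : ℚ)⁻¹) • A (r'':ℤ) κ n))
      = PowerSeries.mk (fun l => ((l.factorial:ℚ))⁻¹ * (A (r'':ℤ) κ l).eval 0) := by
    ext n
    rw [PowerSeries.coeff_map, PowerSeries.coeff_mk, PowerSeries.coeff_mk]
    simp [Polynomial.smul_eq_C_mul]
  rw [h2, h3, mul_one, hBpow] at h
  exact h

include hA in
lemma E1 (r'' : ℕ) (κ : ℤ) :
    ((Lu⁻¹ : (ℚ⟦X⟧)ˣ) : ℚ⟦X⟧) ^ r'' * G κ * V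
      = PowerSeries.mk (fun l => ((l.factorial:ℚ))⁻¹ * (A (r'':ℤ) κ l).eval 1) := by
  have h := congrArg (PowerSeries.map (Polynomial.evalRingHom (1:ℚ))) (hA (r'':ℤ) κ)
  rw [map_mul, mapev] at h
  have h2 : PowerSeries.map (Polynomial.evalRingHom (1:ℚ))
      (PowerSeries.mk (fun n => ((-1 : ℚ) ^ n / n.factorial) • ascPochhammer ℚ n)) = V := by
    ext n
    rw [PowerSeries.coeff_map, PowerSeries.coeff_mk]
    simp only [V, PowerSeries.coeff_mk, Polynomial.smul_eq_C_mul]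
    rw [Polynomial.coe_evalRingHom, Polynomial.eval_mul, Polynomial.eval_C, ascPochhammer_eval_one]
    have : ((n.factorial : ℚ)) ≠ 0 := Nat.cast_ne_zero.mpr n.factorial_ne_zero
    field_simp
  have h3 : PowerSeries.map (Polynomial.evalRingHom (1:ℚ))
      (PowerSeries.mk (fun n => ((n.factorial : ℚ)⁻¹) • A (r'':ℤ) κ n))
      = PowerSeries.mk (fun l => ((l.factorial:ℚ))⁻¹ * (A (r'':ℤ) κ l).eval 1) := by
    ext n
    rw [PowerSeries.coeff_map, PowerSeries.coeff_mk, PowerSeries.coeff_mk]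
    simp [Polynomial.smul_eq_C_mul]
  rw [h2, h3, hBpow] at h
  exact h
end

section
variable (L : ℚ⟦X⟧) (w : ℚ⟦X⟧) (G : ℤ → ℚ⟦X⟧)
  (hODE : ((1 : ℚ⟦X⟧) + X) * (PowerSeries.derivative ℚ L) = 1)
  (hGL : ∀ κ : ℤ, L * (((1:ℚ⟦X⟧) + X) * (PowerSeries.derivative ℚ (G κ))) = G (κ-1) - G κ)
  (hWD : ∀ r'' : ℕ, ((1 : ℚ⟦X⟧) + X) * (PowerSeries.derivative ℚ (w ^ r'')) =
      (r'' : ℚ⟦X⟧) * (H * w ^ (r''+1)) + (r'' : ℚ⟦X⟧) * w ^ r'')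

include hODE hGL hWD in
lemma core (m' r'' : ℕ) (κ : ℤ) :
    ((1:ℚ⟦X⟧) + X) * (PowerSeries.derivative ℚ (w ^ r'' * G κ * L ^ (m'+1)))
    = (r'' : ℚ⟦X⟧) * (H * (w ^ (r''+1) * G κ) * L ^ (m'+1))
      + (r'' : ℚ⟦X⟧) * ((w ^ r'' * G κ) * L ^ (m'+1))
      + (w ^ r'' * G (κ-1)) * L ^ m'
      + (m' : ℚ⟦X⟧) * ((w ^ r'' * G κ) * L ^ m') := by
  have e1 : PowerSeries.derivative ℚ (w ^ r'' * G κ * L ^ (m'+1))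
      = (w ^ r'' * G κ) * PowerSeries.derivative ℚ (L ^ (m'+1))
        + L ^ (m'+1) * PowerSeries.derivative ℚ (w ^ r'' * G κ) := by
    simpa [smul_eq_mul] using Derivation.leibniz (PowerSeries.derivative ℚ) (w ^ r'' * G κ) (L ^ (m'+1))
  have e2 : PowerSeries.derivative ℚ (w ^ r'' * G κ)
      = (w ^ r'') * PowerSeries.derivative ℚ (G κ)
        + (G κ) * PowerSeries.derivative ℚ (w ^ r'') := by
    simpa [smul_eq_mul] using Derivation.leibniz (PowerSeries.derivative ℚ) (w ^ r'') (G κ)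
  have e3 := dLm' L hODE m'
  have e4 := hGL κ
  have e5 := hWD r''
  linear_combination (((1:ℚ⟦X⟧) + X)) * e1 + (((1:ℚ⟦X⟧) + X)) * (L ^ (m'+1)) * e2
    + (w ^ r'' * G κ) * e3 + (L ^ m' * w ^ r'') * e4 + (L ^ (m'+1) * G κ) * e5
end

lemma finalArith (Nf mf nn mm rr q0 q1 q2 q3 q4 : ℚ) (hmf : mf ≠ 0) (hmm : mm + 1 ≠ 0)
    (hq : (nn + 1) * q0 = rr * q1 + rr * q2 + q3 + mm * q4) :
    (nn+1) * Nf / ((mm+1) * mf) * q0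
      = rr * (Nf / ((mm+1)*mf) * q1) + rr * (Nf / ((mm+1)*mf) * q2)
        + 1/(mm+1) * (Nf/mf * q3) + (1 - 1/(mm+1)) * (Nf/mf * q4) := by
  field_simp
  linear_combination Nf * hq

end C17

set_option maxHeartbeats 1600000

/-- for integers `n - 1 ≥ m ≥ 1`, `r ≥ 0` and `k ∈ ℤ`, the identity of
Theorem 5 of the paper, relating `Σ_l C(n,l) S₁(n-l,m) A_l^{(r,k)}` to values of the
mixed type polynomials at `1`. -/
theorem cauchy_stmt17
    (r k : ℤ) (hr : 0 ≤ r) (n m : ℕ) (hm : 1 ≤ m) (hmn : m + 1 ≤ n)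
    (L : PowerSeries ℚ)
    (hL : ∀ n : ℕ, PowerSeries.coeff n L = if n = 0 then 0 else (-1 : ℚ) ^ (n - 1) / n)
    (Lu : (PowerSeries ℚ)ˣ)
    (hLu : (Lu : PowerSeries ℚ) * PowerSeries.X = L)
    (G : ℤ → PowerSeries ℚ)
    (hG : ∀ (j : ℤ) (n : ℕ), PowerSeries.coeff n (G j) =
      ∑ m ∈ Finset.range (n + 1),
        ((m.factorial : ℚ) * ((m : ℚ) + 1) ^ j)⁻¹ * PowerSeries.coeff n (L ^ m))
    (A : ℤ → ℤ → ℕ → Polynomial ℚ)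
    (hA : ∀ ρ κ : ℤ, PowerSeries.map (Polynomial.C : ℚ →+* Polynomial ℚ)
        (((Lu ^ (-ρ) : (PowerSeries ℚ)ˣ) : PowerSeries ℚ) * G κ) *
        PowerSeries.mk (fun n => ((-1 : ℚ) ^ n / n.factorial) • ascPochhammer ℚ n) =
      PowerSeries.mk (fun n => ((n.factorial : ℚ)⁻¹) • A ρ κ n))
    (S1 : ℕ → ℕ → ℚ)
    (hS1 : ∀ n : ℕ, descPochhammer ℚ n =
      ∑ l ∈ Finset.range (n + 1), Polynomial.C (S1 n l) * Polynomial.X ^ l)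
    (hS1zero : ∀ n l : ℕ, n < l → S1 n l = 0)
    :
    ∑ l ∈ Finset.range (n - m + 1), (n.choose l : ℚ) * S1 (n - l) m * (A r k l).eval 0 =
      (r : ℚ) * ∑ l ∈ Finset.range (n - 1 - m + 1), ∑ a ∈ Finset.range (l + 1),
        (-1 : ℚ) ^ (l - a + 1) * (((l - a).factorial : ℚ) / (((l - a : ℕ) : ℚ) + 2)) *
          ((n - 1).choose l : ℚ) * (l.choose a : ℚ) * S1 (n - 1 - l) m *
          (A (r + 1) k a).eval 1
      + (r : ℚ) * ∑ l ∈ Finset.range (n - 1 - m + 1),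
          ((n - 1).choose l : ℚ) * S1 (n - l - 1) m * (A r k l).eval 1
      + (1 / (m : ℚ)) * ∑ l ∈ Finset.range (n - m + 1),
          ((n - 1).choose l : ℚ) * S1 (n - l - 1) (m - 1) * (A r (k - 1) l).eval 1
      + (1 - 1 / (m : ℚ)) * ∑ l ∈ Finset.range (n - m + 1),
          ((n - 1).choose l : ℚ) * S1 (n - l - 1) (m - 1) * (A r k l).eval 1 := by
  classical
  obtain ⟨r', rfl⟩ : ∃ r'' : ℕ, r = (r'' : ℤ) := ⟨r.toNat, (Int.toNat_of_nonneg hr).symm⟩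
  obtain ⟨m', rfl⟩ : ∃ m'' : ℕ, m = m'' + 1 := ⟨m - 1, by omega⟩
  obtain ⟨N, rfl⟩ : ∃ N0 : ℕ, n = N0 + 1 := ⟨n - 1, by omega⟩
  have hmN : m' + 1 ≤ N := by omega
  set w : ℚ⟦X⟧ := ((Lu⁻¹ : (ℚ⟦X⟧)ˣ) : ℚ⟦X⟧) with hw
  have hODE := C17.ODE L hL
  have hK1 := C17.K1 L hL Lu hLu
  have hWD := C17.K1' Lu hK1
  have hGL := C17.Glem L Lu hLu hODE G hG
  have hcLm := C17.coeffLm S1 hS1 hS1zero L Lu hLu hODE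
  have fne : ∀ j : ℕ, ((j.factorial : ℚ)) ≠ 0 :=
    fun j => Nat.cast_ne_zero.mpr j.factorial_ne_zero
  have hS1c : ∀ (Nn M : ℕ), S1 Nn M
      = (Nn.factorial : ℚ) * coeff Nn (L ^ M) / (M.factorial : ℚ) := by
    intro Nn M; rw [hcLm Nn M]; field_simp
  set P0 : ℚ⟦X⟧ := w ^ r' * G k with hP0
  set P1 : ℚ⟦X⟧ := w ^ r' * G k * C17.V with hP1
  set P1' : ℚ⟦X⟧ := w ^ (r'+1) * G k * C17.V with hP1'
  set P1k : ℚ⟦X⟧ := w ^ r' * G (k-1) * C17.V with hP1k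
  have hc0 : ∀ l : ℕ, (A (r' : ℤ) k l).eval 0 = (l.factorial : ℚ) * coeff l P0 := by
    intro l; rw [hP0, hw, C17.E0 Lu G A hA r' k, coeff_mk]; field_simp
  have hc1 : ∀ l : ℕ, (A (r' : ℤ) k l).eval 1 = (l.factorial : ℚ) * coeff l P1 := by
    intro l; rw [hP1, hw, C17.E1 Lu G A hA r' k, coeff_mk]; field_simp
  have hc1' : ∀ l : ℕ, (A ((r' : ℤ) + 1) k l).eval 1 = (l.factorial : ℚ) * coeff l P1' := by
    intro l
    have h := C17.E1 Lu G A hA (r'+1) k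
    push_cast at h
    rw [hP1', hw, h, coeff_mk]; field_simp
  have hc1k : ∀ l : ℕ, (A (r' : ℤ) (k-1) l).eval 1 = (l.factorial : ℚ) * coeff l P1k := by
    intro l; rw [hP1k, hw, C17.E1 Lu G A hA r' (k-1), coeff_mk]; field_simp
  have hcH : ∀ j : ℕ, coeff j C17.H = (-1:ℚ)^(j+1)/((j:ℚ)+2) := by
    intro j; simp [C17.H]
  -- the derivative identity
  have hser : PowerSeries.derivative ℚ (P0 * L^(m'+1))
      = (r' : ℚ⟦X⟧) * (P1' * C17.H * L^(m'+1)) + (r' : ℚ⟦X⟧) * (P1 * L^(m'+1))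
        + P1k * L^m' + (m' : ℚ⟦X⟧) * (P1 * L^m') := by
    have hcore := C17.core L w G hODE hGL hWD m' r' k
    have hVX : C17.V * (((1:ℚ⟦X⟧) + X)) = 1 := by rw [mul_comm]; exact C17.hV
    have h2 : PowerSeries.derivative ℚ (P0 * L^(m'+1))
        = C17.V * ((((1:ℚ⟦X⟧)) + X) * PowerSeries.derivative ℚ (w ^ r' * G k * L^(m'+1))) := by
      rw [hP0, ← mul_assoc, hVX, one_mul]
    rw [h2, hcore, hP1, hP1', hP1k]
    ring
  have hnat : ∀ (c : ℕ) (Z : ℚ⟦X⟧), coeff N ((c : ℚ⟦X⟧) * Z) = (c:ℚ) * coeff N Z := by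
    intro c Z
    rw [← map_natCast (PowerSeries.C (R := ℚ)) c, PowerSeries.coeff_C_mul]
  have hqmain : ((N:ℚ)+1) * coeff (N+1) (P0 * L^(m'+1))
      = (r':ℚ) * coeff N (P1' * C17.H * L^(m'+1)) + (r':ℚ) * coeff N (P1 * L^(m'+1))
        + coeff N (P1k * L^m') + (m':ℚ) * coeff N (P1 * L^m') := by
    have h := congrArg (coeff N) hser
    rw [PowerSeries.coeff_derivative, map_add, map_add, map_add, hnat, hnat, hnat] at h
    push_cast at h ⊢
    linarith [h]
  -- conversions
  have hQm : ∀ j, j < m' + 1 → coeff j (L ^ (m'+1)) = 0 :=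
    fun j hj => C17.coeffLm_zero L Lu hLu hj
  have hQm' : ∀ j, j < m' → coeff j (L ^ m') = 0 :=
    fun j hj => C17.coeffLm_zero L Lu hLu hj
  have hSL : ∑ l ∈ Finset.range (N + 1 - (m' + 1) + 1),
        ((N+1).choose l : ℚ) * S1 (N + 1 - l) (m' + 1) * (A (r' : ℤ) k l).eval 0
      = (((N+1).factorial : ℚ) / (((m'+1).factorial : ℚ)))
          * coeff (N+1) (P0 * L^(m'+1)) := by
    rw [← C17.conv P0 (L^(m'+1)) (N+1) (m'+1) (by omega)
        (fun l => coeff l P0 * coeff (N+1-l) (L^(m'+1))) (fun l _ => rfl) hQm,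
      Finset.mul_sum]
    apply Finset.sum_congr rfl
    intro l hl
    simp only [Finset.mem_range] at hl
    have hlN : l ≤ N + 1 := by omega
    rw [hc0 l, hS1c (N+1-l) (m'+1), Nat.cast_choose ℚ hlN]
    field_simp
  have hT2 : ∑ l ∈ Finset.range (N + 1 - 1 - (m' + 1) + 1),
        ((N + 1 - 1).choose l : ℚ) * S1 (N + 1 - l - 1) (m' + 1) * (A (r' : ℤ) k l).eval 1
      = ((N.factorial : ℚ) / (((m'+1).factorial : ℚ))) * coeff N (P1 * L^(m'+1)) := by
    simp only [Nat.add_sub_cancel]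
    rw [← C17.conv P1 (L^(m'+1)) N (m'+1) (by omega)
        (fun l => coeff l P1 * coeff (N-l) (L^(m'+1))) (fun l _ => rfl) hQm,
      Finset.mul_sum]
    apply Finset.sum_congr rfl
    intro l hl
    simp only [Finset.mem_range] at hl
    have hlN : l ≤ N := by omega
    have he : N + 1 - l - 1 = N - l := by omega
    rw [he, hc1 l, hS1c (N-l) (m'+1), Nat.cast_choose ℚ hlN]
    field_simp
  have hT3 : ∑ l ∈ Finset.range (N + 1 - (m' + 1) + 1),
        ((N + 1 - 1).choose l : ℚ) * S1 (N + 1 - l - 1) (m' + 1 - 1) * (A (r' : ℤ) (k-1) l).eval 1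
      = ((N.factorial : ℚ) / ((m'.factorial : ℚ))) * coeff N (P1k * L^m') := by
    simp only [Nat.add_sub_cancel]
    rw [show N + 1 - (m' + 1) + 1 = N - m' + 1 from by omega]
    rw [← C17.conv P1k (L^m') N m' (by omega)
        (fun l => coeff l P1k * coeff (N-l) (L^m')) (fun l _ => rfl) hQm',
      Finset.mul_sum]
    apply Finset.sum_congr rfl
    intro l hl
    simp only [Finset.mem_range] at hl
    have hlN : l ≤ N := by omega
    have he : N + 1 - l - 1 = N - l := by omega
    rw [he, hc1k l, hS1c (N-l) m', Nat.cast_choose ℚ hlN]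
    field_simp
  have hT4 : ∑ l ∈ Finset.range (N + 1 - (m' + 1) + 1),
        ((N + 1 - 1).choose l : ℚ) * S1 (N + 1 - l - 1) (m' + 1 - 1) * (A (r' : ℤ) k l).eval 1
      = ((N.factorial : ℚ) / ((m'.factorial : ℚ))) * coeff N (P1 * L^m') := by
    simp only [Nat.add_sub_cancel]
    rw [show N + 1 - (m' + 1) + 1 = N - m' + 1 from by omega]
    rw [← C17.conv P1 (L^m') N m' (by omega)
        (fun l => coeff l P1 * coeff (N-l) (L^m')) (fun l _ => rfl) hQm',
      Finset.mul_sum]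
    apply Finset.sum_congr rfl
    intro l hl
    simp only [Finset.mem_range] at hl
    have hlN : l ≤ N := by omega
    have he : N + 1 - l - 1 = N - l := by omega
    rw [he, hc1 l, hS1c (N-l) m', Nat.cast_choose ℚ hlN]
    field_simp
  have hT1 : ∑ l ∈ Finset.range (N + 1 - 1 - (m' + 1) + 1), ∑ a ∈ Finset.range (l + 1),
        (-1 : ℚ) ^ (l - a + 1) * (((l - a).factorial : ℚ) / (((l - a : ℕ) : ℚ) + 2)) *
          ((N + 1 - 1).choose l : ℚ) * (l.choose a : ℚ) * S1 (N + 1 - 1 - l) (m' + 1) *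
          (A ((r' : ℤ) + 1) k a).eval 1
      = ((N.factorial : ℚ) / (((m'+1).factorial : ℚ))) * coeff N (P1' * C17.H * L^(m'+1)) := by
    simp only [Nat.add_sub_cancel]
    rw [← C17.conv (P1' * C17.H) (L^(m'+1)) N (m'+1) (by omega)
        (fun l => coeff l (P1' * C17.H) * coeff (N-l) (L^(m'+1))) (fun l _ => rfl) hQm,
      Finset.mul_sum]
    apply Finset.sum_congr rfl
    intro l hl
    simp only [Finset.mem_range] at hl
    have hlN : l ≤ N := by omega
    have hinner : coeff l (P1' * C17.H)
        = ∑ a ∈ Finset.range (l+1), coeff a P1' * coeff (l - a) C17.H := by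
      rw [coeff_mul, Finset.Nat.sum_antidiagonal_eq_sum_range_succ_mk]
    rw [hinner, Finset.sum_mul, Finset.mul_sum]
    apply Finset.sum_congr rfl
    intro a ha
    simp only [Finset.mem_range] at ha
    have hal : a ≤ l := by omega
    rw [show (-1:ℚ)^(l-a+1) * (((l - a).factorial : ℚ) / (((l - a : ℕ) : ℚ) + 2))
        = ((l-a).factorial : ℚ) * coeff (l-a) C17.H from by rw [hcH]; ring,
      hc1' a, hS1c (N-l) (m'+1), Nat.cast_choose ℚ hlN, Nat.cast_choose ℚ hal]
    field_simp
  rw [hSL, hT1, hT2, hT3, hT4]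
  have e1 : ((N+1).factorial : ℚ) = ((N:ℚ)+1) * (N.factorial:ℚ) := by
    rw [Nat.factorial_succ]; push_cast; ring
  have e2 : ((m'+1).factorial : ℚ) = ((m':ℚ)+1) * (m'.factorial:ℚ) := by
    rw [Nat.factorial_succ]; push_cast; ring
  have e3 : (((r':ℕ):ℤ):ℚ) = (r':ℚ) := by push_cast; ring
  have e4 : (((m'+1:ℕ)):ℚ) = (m':ℚ)+1 := by push_cast; ring
  rw [e1, e2, e3, e4]
  exact C17.finalArith _ _ _ _ _ _ _ _ _ _ (fne m') (by positivity) hqmain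
end
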